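/- Let X be an n×k real matrix of rank k (n>k), Ω an n×n positive definite matrix, and K a k×k positive semidefinite matrix that is NOT positive definite (i.e., rank(K) < k). Set T = Ω + X K X^T and F = K X^T T^{-1}. Then there is no k×k matrix G with X = T F^T G; that is, the column space of X is not contained in the column space of T F^T. -/

import Mathlib

open Matrix

theorem stmt_3 {n k : ℕ} (hnk : k < n)
    (X : Matrix (Fin n) (Fin k) ℝ) (hX : X.rank = k)
    (Ω : Matrix (Fin n) (Fin n) ℝ) (hΩ : Ω.PosDef)
    (K : Matrix (Fin k) (Fin k) ℝ) (hK : K.PosSemidef) (hKnot : K.rank < k) :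
    ¬ ∃ G : Matrix (Fin k) (Fin k) ℝ,
      X = (Ω + X * K * Xᵀ) * (K * Xᵀ * (Ω + X * K * Xᵀ)⁻¹)ᵀ * G := by
  rintro ⟨G, hG⟩
  set T := Ω + X * K * Xᵀ with hT
  -- T is positive definite
  have hPSD : (X * K * Xᵀ).PosSemidef := by
    have := hK.mul_mul_conjTranspose_same X
    rwa [conjTranspose_eq_transpose_of_trivial] at this
  have hTpd : T.PosDef := hΩ.add_posSemidef hPSD
  have hTunit : IsUnit T.det := hTpd.det_pos.ne'.isUnit
  have hTsymm : Tᵀ = T := by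
    have := hTpd.isHermitian.eq
    rwa [conjTranspose_eq_transpose_of_trivial] at this
  have hKsymm : Kᵀ = K := by
    have := hK.isHermitian.eq
    rwa [conjTranspose_eq_transpose_of_trivial] at this
  -- simplify the equation to X = X * (K * G)
  have hG' : X = X * (K * G) := by
    calc X = T * (K * Xᵀ * T⁻¹)ᵀ * G := hG
    _ = T * ((T⁻¹)ᵀ * (X * Kᵀ)) * G := by
        rw [transpose_mul, transpose_mul, transpose_transpose, Matrix.mul_assoc]
    _ = (T * T⁻¹) * (X * K) * G := by
        rw [transpose_nonsing_inv, hTsymm, hKsymm, ← Matrix.mul_assoc T T⁻¹]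
    _ = X * (K * G) := by
        rw [Matrix.mul_nonsing_inv _ hTunit, Matrix.one_mul, Matrix.mul_assoc]
  -- Xᵀ * X is invertible since rank X = k
  have hrank : (Xᵀ * X).rank = k := by rw [X.rank_transpose_mul_self, hX]
  have hAunit : IsUnit (Xᵀ * X).det := by
    rw [← isUnit_iff_isUnit_det, ← mulVec_surjective_iff_isUnit]
    have hrange : LinearMap.range (Xᵀ * X).mulVecLin = ⊤ := by
      apply Submodule.eq_top_of_finrank_eq
      rw [← Matrix.rank, hrank]
      simp [Module.finrank_pi]
    exact LinearMap.range_eq_top.mp hrange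
  -- deduce K * G = 1
  have hKG : K * G = 1 := by
    have h1 : (Xᵀ * X) * (K * G) = (Xᵀ * X) * 1 := by
      rw [Matrix.mul_assoc Xᵀ X, ← hG', Matrix.mul_one]
    calc K * G = (Xᵀ * X)⁻¹ * ((Xᵀ * X) * (K * G)) := by
          rw [← Matrix.mul_assoc, Matrix.nonsing_inv_mul _ hAunit, Matrix.one_mul]
    _ = 1 := by rw [h1, Matrix.mul_one, Matrix.nonsing_inv_mul _ hAunit]
  -- so K is a unit, contradicting rank K < k
  have hKdet : IsUnit K.det := by
    have : K.det * G.det = 1 := by rw [← det_mul, hKG, det_one]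
    exact IsUnit.of_mul_eq_one _ this
  have hKunit : IsUnit K := (isUnit_iff_isUnit_det K).mpr hKdet
  have : K.rank = k := by
    have := Matrix.rank_of_isUnit K hKunit
    simpa using this
  omega
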